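/- For |q|<1, the function W₁(q) := ∑_{n≥0} (−1)^n (q;q)_n q^{n(n+1)/2}/(−q;q)_n satisfies the identity ∑_{n≥1} q^{n(n−1)}/((1+q^{2n−1})·(−q²;q²)_{n−1}) = W₁(q). -/

import Mathlib

open scoped BigOperators
open Filter Finset Topology

open scoped BigOperators
open Filter Finset Topology

/-- The finite q-Pochhammer symbol `(a;q)_n = ∏_{j=0}^{n-1} (1 - a q^j)`. -/
noncomputable def qPoch (a q : ℂ) (n : ℕ) : ℂ := ∏ j ∈ Finset.range n, (1 - a * q ^ j)

lemma qPoch_zero (a Q : ℂ) : qPoch a Q 0 = 1 := by simp [qPoch]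

lemma qPoch_succ (a Q : ℂ) (n : ℕ) :
    qPoch a Q (n+1) = qPoch a Q n * (1 - a * Q ^ n) := Finset.prod_range_succ _ _

lemma qPoch_shift (a Q : ℂ) (n : ℕ) :
    qPoch a Q (n+1) = (1 - a) * qPoch (a*Q) Q n := by
  rw [qPoch, Finset.prod_range_succ']
  simp only [pow_zero, mul_one, qPoch]
  rw [mul_comm]
  congr 1
  exact Finset.prod_congr rfl fun j _ => by ring

lemma one_sub_ne_zero {z : ℂ} (hz : ‖z‖ < 1) : (1 : ℂ) - z ≠ 0 := by
  intro h
  have : z = 1 := by linear_combination -h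
  rw [this] at hz; norm_num at hz

lemma qPoch_ne_zero {a Q : ℂ} (ha : ‖a‖ < 1) (hQ : ‖Q‖ ≤ 1) (n : ℕ) :
    qPoch a Q n ≠ 0 := by
  rw [qPoch]
  apply Finset.prod_ne_zero_iff.2
  intro j _
  apply one_sub_ne_zero
  rw [norm_mul, norm_pow]
  calc ‖a‖ * ‖Q‖^j ≤ ‖a‖ * 1 := by
        apply mul_le_mul_of_nonneg_left _ (norm_nonneg a)
        exact pow_le_one₀ (norm_nonneg Q) hQ
    _ < 1 := by simpa using ha


lemma geom_sum_le_inv {r : ℝ} (h0 : 0 ≤ r) (h1 : r < 1) (n : ℕ) :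
    ∑ j ∈ Finset.range n, r^j ≤ (1-r)⁻¹ := by
  have := tsum_geometric_of_lt_one h0 h1
  rw [← this]
  exact Summable.sum_le_tsum _ (fun j _ => pow_nonneg h0 j) (summable_geometric_of_lt_one h0 h1)

lemma norm_qPoch_le {Q : ℂ} (a : ℂ) (hQ : ‖Q‖ < 1) (n : ℕ) :
    ‖qPoch a Q n‖ ≤ Real.exp (‖a‖ * (1-‖Q‖)⁻¹) := by
  have h1 : (0:ℝ) < 1 - ‖Q‖ := by linarith
  rw [qPoch]
  calc ‖∏ j ∈ Finset.range n, (1 - a * Q ^ j)‖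
      = ∏ j ∈ Finset.range n, ‖(1 - a * Q ^ j)‖ := norm_prod _ _
    _ ≤ ∏ j ∈ Finset.range n, Real.exp (‖a‖ * ‖Q‖^j) := by
        apply Finset.prod_le_prod (fun j _ => norm_nonneg _)
        intro j _
        calc ‖1 - a*Q^j‖ ≤ ‖(1:ℂ)‖ + ‖a*Q^j‖ := norm_sub_le _ _
          _ = 1 + ‖a‖*‖Q‖^j := by rw [norm_one, norm_mul, norm_pow]
          _ ≤ Real.exp (‖a‖*‖Q‖^j) := by
              have := Real.add_one_le_exp (‖a‖*‖Q‖^j)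
              linarith
    _ = Real.exp (∑ j ∈ Finset.range n, ‖a‖ * ‖Q‖^j) := (Real.exp_sum _ _).symm
    _ ≤ Real.exp (‖a‖ * (1-‖Q‖)⁻¹) := by
        apply Real.exp_le_exp.2
        rw [← Finset.mul_sum]
        apply mul_le_mul_of_nonneg_left _ (norm_nonneg a)
        exact geom_sum_le_inv (norm_nonneg Q) hQ n

lemma one_sub_sum_le_prod {x : ℕ → ℝ} (h0 : ∀ j, 0 ≤ x j) (h1 : ∀ j, x j ≤ 1) :
    ∀ n, 1 - ∑ j ∈ Finset.range n, x j ≤ ∏ j ∈ Finset.range n, (1 - x j) := by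
  intro n
  induction n with
  | zero => simp
  | succ m ih =>
    rw [Finset.sum_range_succ, Finset.prod_range_succ]
    have hp : (0:ℝ) ≤ ∏ j ∈ Finset.range m, (1 - x j) :=
      Finset.prod_nonneg fun j _ => by linarith [h0 j, h1 j]
    have hs : (0:ℝ) ≤ ∑ j ∈ Finset.range m, x j :=
      Finset.sum_nonneg fun j _ => h0 j
    nlinarith [h0 m, h1 m]

lemma norm_qPoch_ge {b Q : ℂ} (hQ : ‖Q‖ < 1) (hb : ‖b‖ ≤ (1-‖Q‖)/2) (n : ℕ) :
    (1:ℝ)/2 ≤ ‖qPoch b Q n‖ := by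
  have h1 : (0:ℝ) < 1 - ‖Q‖ := by linarith
  have hb1 : ‖b‖ ≤ 1 := by linarith [norm_nonneg Q]
  rw [qPoch]
  rw [norm_prod]
  calc (1:ℝ)/2 ≤ 1 - ∑ j ∈ Finset.range n, ‖b‖*‖Q‖^j := by
        have : ∑ j ∈ Finset.range n, ‖b‖*‖Q‖^j ≤ ‖b‖ * (1-‖Q‖)⁻¹ := by
          rw [← Finset.mul_sum]
          apply mul_le_mul_of_nonneg_left _ (norm_nonneg b)
          exact geom_sum_le_inv (norm_nonneg Q) hQ n
        have h5 : ‖b‖ * (1-‖Q‖)⁻¹ ≤ 1/2 := by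
          rw [← le_div_iff₀ (inv_pos.2 h1)] at *
          calc ‖b‖ ≤ (1-‖Q‖)/2 := hb
            _ = 1/2/(1-‖Q‖)⁻¹ := by field_simp
        linarith
    _ ≤ ∏ j ∈ Finset.range n, (1 - ‖b‖*‖Q‖^j) := by
        apply one_sub_sum_le_prod
        · intro j; positivity
        · intro j
          calc ‖b‖*‖Q‖^j ≤ 1*1 := by
                apply mul_le_mul hb1 (pow_le_one₀ (norm_nonneg _) (le_of_lt hQ))
                  (by positivity) one_pos.le
            _ = 1 := by norm_num
    _ ≤ ∏ j ∈ Finset.range n, ‖1 - b*Q^j‖ := by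
        apply Finset.prod_le_prod
        · intro j _
          have : ‖b‖*‖Q‖^j ≤ 1 := by
            calc ‖b‖*‖Q‖^j ≤ 1*1 := by
                  apply mul_le_mul hb1 (pow_le_one₀ (norm_nonneg _) (le_of_lt hQ))
                    (by positivity) one_pos.le
              _ = 1 := by norm_num
          linarith
        · intro j _
          calc 1 - ‖b‖*‖Q‖^j = ‖(1:ℂ)‖ - ‖b*Q^j‖ := by
                rw [norm_one, norm_mul, norm_pow]
            _ ≤ ‖1 - b*Q^j‖ := norm_sub_norm_le _ _

noncomputable def fterm (Q a b t : ℂ) (n : ℕ) : ℂ := qPoch a Q n * t^n / qPoch b Q n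

noncomputable def FF (Q a b t : ℂ) : ℂ := ∑' n, fterm Q a b t n

lemma summable_ratio {f : ℕ → ℂ} {c : ℕ → ℝ} {L : ℝ}
    (h : ∀ n, ‖f (n+1)‖ ≤ c n * ‖f n‖) (hc0 : ∀ n, 0 ≤ c n)
    (hc : Tendsto c atTop (𝓝 L)) (hL : L < 1) : Summable f := by
  have hL0 : 0 ≤ L := le_of_tendsto_of_tendsto' tendsto_const_nhds hc (fun n => hc0 n)
  have hr1 : (L+1)/2 < 1 := by linarith
  have hr0 : L < (L+1)/2 := by linarith
  apply summable_of_ratio_norm_eventually_le hr1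
  filter_upwards [hc.eventually_lt_const hr0] with n hn
  calc ‖f (n+1)‖ ≤ c n * ‖f n‖ := h n
    _ ≤ (L+1)/2 * ‖f n‖ := mul_le_mul_of_nonneg_right (le_of_lt hn) (norm_nonneg _)

lemma fterm_succ (Q a b t : ℂ) (n : ℕ) :
    fterm Q a b t (n+1) = fterm Q a b t n * ((1 - a*Q^n) * t / (1 - b*Q^n)) := by
  unfold fterm
  rw [qPoch_succ, qPoch_succ, pow_succ, div_mul_div_comm]
  ring_nf

lemma summable_fterm {Q a b t : ℂ} (hQ : ‖Q‖ < 1) (ht : ‖t‖ < 1) (hb : ‖b‖ < 1) :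
    Summable (fterm Q a b t) := by
  set c : ℕ → ℝ := fun n => (1 + ‖a‖*‖Q‖^n) * ‖t‖ / (1 - ‖b‖*‖Q‖^n) with hcdef
  have hden : ∀ n : ℕ, 0 < 1 - ‖b‖*‖Q‖^n := by
    intro n
    have h1 : ‖b‖*‖Q‖^n ≤ ‖b‖ * 1 :=
      mul_le_mul_of_nonneg_left (pow_le_one₀ (norm_nonneg _) hQ.le) (norm_nonneg _)
    have := norm_nonneg b
    nlinarith
  have hc0 : ∀ n, 0 ≤ c n := by
    intro n
    apply div_nonneg _ (hden n).le
    positivity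
  apply summable_ratio (c := c) (L := ‖t‖) _ hc0 _ ht
  · intro n
    rw [fterm_succ, norm_mul, mul_comm (c n)]
    apply mul_le_mul_of_nonneg_left _ (norm_nonneg _)
    rw [norm_div, norm_mul]
    apply div_le_div₀ _ _ (hden n) _
    · positivity
    · apply mul_le_mul_of_nonneg_right _ (norm_nonneg t)
      calc ‖1 - a*Q^n‖ ≤ ‖(1:ℂ)‖ + ‖a*Q^n‖ := norm_sub_le _ _
        _ = 1 + ‖a‖*‖Q‖^n := by rw [norm_one, norm_mul, norm_pow]
    · calc 1 - ‖b‖*‖Q‖^n = ‖(1:ℂ)‖ - ‖b*Q^n‖ := by rw [norm_one, norm_mul, norm_pow]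
        _ ≤ ‖1 - b*Q^n‖ := norm_sub_norm_le _ _
  · have hpow : Tendsto (fun n : ℕ => ‖Q‖^n) atTop (𝓝 0) :=
      tendsto_pow_atTop_nhds_zero_of_lt_one (norm_nonneg Q) hQ
    have : Tendsto c atTop (𝓝 ((1 + ‖a‖*0) * ‖t‖ / (1 - ‖b‖*0))) := by
      apply Tendsto.div
      · exact (((hpow.const_mul ‖a‖).const_add 1)).mul_const ‖t‖
      · exact (hpow.const_mul ‖b‖).const_sub 1
      · norm_num
    simpa using this

lemma norm_FF_le {Q a b t : ℂ} {s : ℝ} (hQ : ‖Q‖ < 1) (ha : ‖a‖ ≤ 1)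
    (hts : ‖t‖ ≤ s) (hs : s < 1) (hb : ‖b‖ ≤ (1-‖Q‖)/2) :
    ‖FF Q a b t‖ ≤ 2 * Real.exp ((1-‖Q‖)⁻¹) * (1-s)⁻¹ := by
  have hs0 : 0 ≤ s := le_trans (norm_nonneg t) hts
  have hE : (0:ℝ) < Real.exp ((1-‖Q‖)⁻¹) := Real.exp_pos _
  have hbound : ∀ n : ℕ, ‖fterm Q a b t n‖ ≤ 2 * Real.exp ((1-‖Q‖)⁻¹) * s^n := by
    intro n
    unfold fterm
    rw [norm_div, norm_mul, norm_pow]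
    have h1 : ‖qPoch a Q n‖ ≤ Real.exp ((1-‖Q‖)⁻¹) := by
      calc ‖qPoch a Q n‖ ≤ Real.exp (‖a‖ * (1-‖Q‖)⁻¹) := norm_qPoch_le a hQ n
        _ ≤ Real.exp ((1-‖Q‖)⁻¹) := by
            apply Real.exp_le_exp.2
            have : (0:ℝ) < (1-‖Q‖)⁻¹ := by
              apply inv_pos.2; linarith
            nlinarith
    have h2 : (1:ℝ)/2 ≤ ‖qPoch b Q n‖ := norm_qPoch_ge hQ hb n
    have h3 : ‖t‖^n ≤ s^n := pow_le_pow_left₀ (norm_nonneg t) hts n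
    calc ‖qPoch a Q n‖ * ‖t‖^n / ‖qPoch b Q n‖
        ≤ Real.exp ((1-‖Q‖)⁻¹) * s^n / (1/2) := by
          apply div_le_div₀ (by positivity) _ (by norm_num) h2
          apply mul_le_mul h1 h3 (by positivity) hE.le
      _ = 2 * Real.exp ((1-‖Q‖)⁻¹) * s^n := by ring
  have hsumg : Summable (fun n : ℕ => 2 * Real.exp ((1-‖Q‖)⁻¹) * s^n) :=
    (summable_geometric_of_lt_one hs0 hs).mul_left _
  have hsumn : Summable (fun n => ‖fterm Q a b t n‖) :=
    Summable.of_nonneg_of_le (fun n => norm_nonneg _) hbound hsumg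
  calc ‖FF Q a b t‖ ≤ ∑' n, ‖fterm Q a b t n‖ := norm_tsum_le_tsum_norm hsumn
    _ ≤ ∑' n, 2 * Real.exp ((1-‖Q‖)⁻¹) * s^n := Summable.tsum_le_tsum hbound hsumn hsumg
    _ = 2 * Real.exp ((1-‖Q‖)⁻¹) * (1-s)⁻¹ := by
        rw [tsum_mul_left, tsum_geometric_of_lt_one hs0 hs]

lemma prod_tendsto_zero {ρ : ℕ → ℝ} (h0 : ∀ j, 0 ≤ ρ j)
    (hρ : Tendsto ρ atTop (𝓝 0)) :
    Tendsto (fun N => ∏ j ∈ Finset.range N, ρ j) atTop (𝓝 0) := by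
  have hsum : Summable (fun N => ∏ j ∈ Finset.range N, ρ j) := by
    apply summable_of_ratio_norm_eventually_le (r := 1/2) (by norm_num)
    filter_upwards [hρ.eventually_lt_const (by norm_num : (0:ℝ) < 1/2)] with n hn
    rw [Finset.prod_range_succ, norm_mul]
    rw [Real.norm_eq_abs (ρ n), abs_of_nonneg (h0 n)]
    calc ‖∏ j ∈ Finset.range n, ρ j‖ * ρ n ≤ ‖∏ j ∈ Finset.range n, ρ j‖ * (1/2) :=
          mul_le_mul_of_nonneg_left hn.le (norm_nonneg _)
      _ = 1/2 * ‖∏ j ∈ Finset.range n, ρ j‖ := by ring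
  exact hsum.tendsto_atTop_zero

lemma fact_ne {z : ℂ} (hz : ‖z‖ < 1) (Q : ℂ) (hQ : ‖Q‖ ≤ 1) (n : ℕ) :
    (1 : ℂ) - z*Q^n ≠ 0 := by
  apply one_sub_ne_zero
  rw [norm_mul, norm_pow]
  calc ‖z‖ * ‖Q‖^n ≤ ‖z‖ * 1 :=
        mul_le_mul_of_nonneg_left (pow_le_one₀ (norm_nonneg _) hQ) (norm_nonneg _)
    _ < 1 := by simpa using hz

lemma R1 {Q a b t : ℂ} (hQ : ‖Q‖ < 1) (ht : ‖t‖ < 1) (hb : ‖b‖ < 1) :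
    (1-b) * FF Q a b t = (1-b) + t*(1-a) * FF Q (a*Q) (b*Q) t := by
  have hbQ : ‖b*Q‖ < 1 := by
    rw [norm_mul]
    calc ‖b‖*‖Q‖ ≤ 1*‖Q‖ := mul_le_mul_of_nonneg_right hb.le (norm_nonneg _)
      _ < 1 := by simpa using hQ
  have hf : Summable (fterm Q a b t) := summable_fterm hQ ht hb
  have key : ∀ n, (1-b) * fterm Q a b t (n+1) = (t*(1-a)) * fterm Q (a*Q) (b*Q) t n := by
    intro n
    unfold fterm
    rw [qPoch_shift a Q n, qPoch_shift b Q n]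
    have h1 : (1:ℂ) - b ≠ 0 := by simpa using fact_ne hb Q hQ.le 0
    have h2 : qPoch (b*Q) Q n ≠ 0 := qPoch_ne_zero hbQ hQ.le n
    field_simp
    ring
  have e0 : FF Q a b t = fterm Q a b t 0 + ∑' n, fterm Q a b t (n+1) :=
    hf.tsum_eq_zero_add
  have hf0 : fterm Q a b t 0 = 1 := by simp [fterm, qPoch_zero]
  calc (1-b) * FF Q a b t = (1-b) + (1-b) * ∑' n, fterm Q a b t (n+1) := by
        rw [e0, hf0]; ring
    _ = (1-b) + ∑' n, (1-b) * fterm Q a b t (n+1) := by rw [tsum_mul_left]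
    _ = (1-b) + ∑' n, (t*(1-a)) * fterm Q (a*Q) (b*Q) t n := by
        congr 1; exact tsum_congr key
    _ = (1-b) + t*(1-a) * FF Q (a*Q) (b*Q) t := by rw [tsum_mul_left]; rfl

lemma R2 {Q a c t : ℂ} (hQ : ‖Q‖ < 1) (ht : ‖t‖ < 1) (hb : ‖c*Q‖ < 1) :
    (1-t) * FF Q a (c*Q) t = (1-c) + (c - a*t) * FF Q a (c*Q) (t*Q) := by
  have htQ : ‖t*Q‖ < 1 := by
    rw [norm_mul]
    calc ‖t‖*‖Q‖ ≤ 1*‖Q‖ := mul_le_mul_of_nonneg_right ht.le (norm_nonneg _)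
      _ < 1 := by simpa using hQ
  set g : ℕ → ℂ := fterm Q a (c*Q) t with hgdef
  set g' : ℕ → ℂ := fterm Q a (c*Q) (t*Q) with hg'def
  have hg : Summable g := summable_fterm hQ ht hb
  have hg' : Summable g' := summable_fterm hQ htQ hb
  have hshift : Summable (fun n => g' (n+1)) := by
    rw [show (fun n => g' (n+1)) = (fun n => g' (n+1)) from rfl]
    exact (summable_nat_add_iff 1).2 hg'
  have key : ∀ n, g (n+1) = t * g n - (a*t) * g' n + c * g' (n+1) := by
    intro n
    simp only [hgdef, hg'def]
    unfold fterm
    rw [qPoch_succ a Q n, qPoch_succ (c*Q) Q n]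
    have h1 : qPoch (c*Q) Q n ≠ 0 := qPoch_ne_zero hb hQ.le n
    have h2 : (1:ℂ) - (c*Q)*Q^n ≠ 0 := fact_ne hb Q hQ.le n
    have e1 : qPoch (c*Q) Q n * (qPoch (c*Q) Q n)⁻¹ = 1 := mul_inv_cancel₀ h1
    have e2 : (1 - (c*Q)*Q^n) * (1 - (c*Q)*Q^n)⁻¹ = 1 := mul_inv_cancel₀ h2
    simp only [div_eq_mul_inv, mul_inv]
    linear_combination (qPoch a Q n * (1 - a*Q^n) * t^(n+1) * (qPoch (c*Q) Q n)⁻¹) * e2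
  have e0 : ∑' n, g n = g 0 + ∑' n, g (n+1) := hg.tsum_eq_zero_add
  have e0' : ∑' n, g' n = g' 0 + ∑' n, g' (n+1) := hg'.tsum_eq_zero_add
  have hg0 : g 0 = 1 := by simp [hgdef, fterm, qPoch_zero]
  have hg'0 : g' 0 = 1 := by simp [hg'def, fterm, qPoch_zero]
  have e1 : ∑' n, g (n+1) = t * (∑' n, g n) - (a*t) * (∑' n, g' n) + c * (∑' n, g' (n+1)) := by
    calc ∑' n, g (n+1) = ∑' n, (t * g n - (a*t) * g' n + c * g' (n+1)) := tsum_congr key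
      _ = (∑' n, (t * g n - (a*t) * g' n)) + ∑' n, c * g' (n+1) :=
          Summable.tsum_add ((hg.mul_left t).sub (hg'.mul_left (a*t))) (hshift.mul_left c)
      _ = ((∑' n, t * g n) - ∑' n, (a*t) * g' n) + ∑' n, c * g' (n+1) := by
          rw [Summable.tsum_sub (hg.mul_left t) (hg'.mul_left (a*t))]
      _ = t * (∑' n, g n) - (a*t) * (∑' n, g' n) + c * (∑' n, g' (n+1)) := by
          rw [tsum_mul_left, tsum_mul_left, tsum_mul_left]
  rw [hg0] at e0
  rw [hg'0] at e0'
  show (1-t) * (∑' n, g n) = (1-c) + (c - a*t) * (∑' n, g' n)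
  linear_combination e0 + e1 - c * e0'

lemma Rsplit {Q a b t : ℂ} (hQ : ‖Q‖ < 1) (ht : ‖t‖ < 1) (hb : ‖b‖ < 1) :
    (1-b) * FF Q a b t = FF Q a (b*Q) t - b * FF Q a (b*Q) (t*Q) := by
  have hbQ : ‖b*Q‖ < 1 := by
    rw [norm_mul]
    calc ‖b‖*‖Q‖ ≤ 1*‖Q‖ := mul_le_mul_of_nonneg_right hb.le (norm_nonneg _)
      _ < 1 := by simpa using hQ
  have htQ : ‖t*Q‖ < 1 := by
    rw [norm_mul]
    calc ‖t‖*‖Q‖ ≤ 1*‖Q‖ := mul_le_mul_of_nonneg_right ht.le (norm_nonneg _)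
      _ < 1 := by simpa using hQ
  have hg : Summable (fterm Q a (b*Q) t) := summable_fterm hQ ht hbQ
  have hg' : Summable (fterm Q a (b*Q) (t*Q)) := summable_fterm hQ htQ hbQ
  have key : ∀ n, (1-b) * fterm Q a b t n
      = fterm Q a (b*Q) t n - b * fterm Q a (b*Q) (t*Q) n := by
    intro n
    have hrel : qPoch b Q n * (1 - b*Q^n) = (1-b) * qPoch (b*Q) Q n := by
      rw [← qPoch_succ, qPoch_shift]
    have h1 : qPoch b Q n ≠ 0 := qPoch_ne_zero hb hQ.le n
    have h2 : qPoch (b*Q) Q n ≠ 0 := qPoch_ne_zero hbQ hQ.le n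
    have h3 : (1:ℂ) - b*Q^n ≠ 0 := fact_ne hb Q hQ.le n
    have h4 : qPoch b Q n = (1-b) * qPoch (b*Q) Q n / (1 - b*Q^n) := by
      field_simp [← hrel]
      exact hrel
    unfold fterm
    rw [h4]
    have h5 : (1:ℂ) - b ≠ 0 := by simpa using fact_ne hb Q hQ.le 0
    field_simp
    ring
  calc (1-b) * FF Q a b t = ∑' n, (1-b) * fterm Q a b t n := by
        rw [tsum_mul_left]; rfl
    _ = ∑' n, (fterm Q a (b*Q) t n - b * fterm Q a (b*Q) (t*Q) n) := tsum_congr key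
    _ = (∑' n, fterm Q a (b*Q) t n) - ∑' n, b * fterm Q a (b*Q) (t*Q) n :=
        Summable.tsum_sub hg (hg'.mul_left b)
    _ = FF Q a (b*Q) t - b * FF Q a (b*Q) (t*Q) := by rw [tsum_mul_left]; rfl

section Chain
variable {q : ℂ}

noncomputable def vk (q : ℂ) (k : ℕ) : ℂ :=
  FF (q^2) q (-((q^2)^(k+1))) (-(q*(q^2)^k))

noncomputable def wk (q : ℂ) (k : ℕ) : ℂ :=
  FF (q^2) (q*(q^2)^k) (-((q^2)^(k+1))) (-(q*(q^2)^k))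

lemma normQ (hq : ‖q‖ < 1) : ‖q^2‖ < 1 := by
  rw [norm_pow]
  exact pow_lt_one₀ (norm_nonneg q) hq (by norm_num)

lemma normT (hq : ‖q‖ < 1) (k : ℕ) : ‖-(q*(q^2)^k)‖ < 1 := by
  rw [norm_neg, norm_mul]
  calc ‖q‖ * ‖(q^2)^k‖ ≤ ‖q‖ * 1 := by
        apply mul_le_mul_of_nonneg_left _ (norm_nonneg q)
        rw [norm_pow]
        exact pow_le_one₀ (norm_nonneg _) (normQ hq).le
    _ < 1 := by simpa using hq

lemma normB (hq : ‖q‖ < 1) (k : ℕ) : ‖-((q^2)^(k+1))‖ < 1 := by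
  rw [norm_neg, norm_pow]
  exact pow_lt_one₀ (norm_nonneg _) (normQ hq) (by norm_num)

lemma vstep (hq : ‖q‖ < 1) (k : ℕ) :
    (1+(q^2)^(k+1)) * (1+q*(q^2)^k) * vk q k
      = (1+(q^2)^(k+1)) + (q^2)^(k+1) * (1+q*(q^2)^k) * vk q (k+1) := by
  have hQ := normQ hq
  have hT := normT hq k
  have hB := normB hq k
  have E1 := Rsplit (a := q) hQ hT hB
  have E2 := R2 (a := q) (c := -((q^2)^(k+1))) (t := -(q*(q^2)^k)) hQ hT
    (by rw [show -((q^2)^(k+1)) * q^2 = -((q^2)^(k+2)) by ring]; exact normB hq (k+1))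
  rw [show -((q^2)^(k+1)) * q^2 = -((q^2)^(k+1+1)) by ring] at E1 E2
  rw [show -(q*(q^2)^k) * q^2 = -(q*(q^2)^(k+1)) by ring] at E1 E2
  show (1+(q^2)^(k+1)) * (1+q*(q^2)^k) * FF (q^2) q (-((q^2)^(k+1))) (-(q*(q^2)^k))
      = (1+(q^2)^(k+1)) + (q^2)^(k+1) * (1+q*(q^2)^k)
        * FF (q^2) q (-((q^2)^(k+1+1))) (-(q*(q^2)^(k+1)))
  linear_combination (1 + q*(q^2)^k) * E1 + E2

lemma wstep (hq : ‖q‖ < 1) (k : ℕ) :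
    (1+(q^2)^(k+1)) * (1+q*(q^2)^k) * wk q k
      = (1+(q^2)^(k+1))*(1+(q^2)^(2*k+1))
        + q*(q^2)^(2*k+1)*(1-(q^2)^(k+1))*(1-q*(q^2)^k) * wk q (k+1) := by
  have hQ := normQ hq
  have hT := normT hq k
  have hB := normB hq k
  have hA : ‖q*(q^2)^k‖ < 1 := by have := normT hq k; rwa [norm_neg] at this
  have hTQ : ‖-(q*(q^2)^k) * q^2‖ < 1 := by
    rw [show -(q*(q^2)^k) * q^2 = -(q*(q^2)^(k+1)) by ring]
    exact normT hq (k+1)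
  have E2 := R2 (a := q*(q^2)^k) (c := -((q^2)^k)) (t := -(q*(q^2)^k)) hQ hT
    (by rw [show -((q^2)^k) * q^2 = -((q^2)^(k+1)) by ring]; exact normB hq k)
  rw [show -((q^2)^k) * q^2 = -((q^2)^(k+1)) by ring] at E2
  have E1 := R1 (a := q*(q^2)^k) (b := -((q^2)^(k+1))) (t := -(q*(q^2)^k) * q^2) hQ hTQ hB
  rw [show -((q^2)^(k+1)) * q^2 = -((q^2)^(k+1+1)) by ring] at E1
  rw [show q*(q^2)^k * q^2 = q*(q^2)^(k+1) by ring] at E1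
  rw [show -(q*(q^2)^k) * q^2 = -(q*(q^2)^(k+1)) by ring] at E1 E2
  show (1+(q^2)^(k+1)) * (1+q*(q^2)^k) * FF (q^2) (q*(q^2)^k) (-((q^2)^(k+1))) (-(q*(q^2)^k))
      = (1+(q^2)^(k+1))*(1+(q^2)^(2*k+1))
        + q*(q^2)^(2*k+1)*(1-(q^2)^(k+1))*(1-q*(q^2)^k)
          * FF (q^2) (q*(q^2)^(k+1)) (-((q^2)^(k+1+1))) (-(q*(q^2)^(k+1)))
  linear_combination (1+(q^2)^(k+1)) * E2 + ((-((q^2)^k)) - (q*(q^2)^k) * (-(q*(q^2)^k))) * E1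

lemma one_add_pow_ne (hq : ‖q‖ < 1) {m : ℕ} (hm : m ≠ 0) : (1 : ℂ) + q^m ≠ 0 := by
  have : ‖-(q^m)‖ < 1 := by
    rw [norm_neg, norm_pow]
    exact pow_lt_one₀ (norm_nonneg q) hq hm
  have h := one_sub_ne_zero this
  rw [sub_neg_eq_add] at h
  exact h

lemma ne_qQ (hq : ‖q‖ < 1) (k : ℕ) : (1 : ℂ) + q*(q^2)^k ≠ 0 := by
  have : q*(q^2)^k = q^(2*k+1) := by ring
  rw [this]
  exact one_add_pow_ne hq (by omega)

lemma ne_Q (hq : ‖q‖ < 1) (m : ℕ) : (1 : ℂ) + (q^2)^(m+1) ≠ 0 := by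
  have : (q^2)^(m+1) = q^(2*m+2) := by ring
  rw [this]
  exact one_add_pow_ne hq (by omega)

lemma vdiv (hq : ‖q‖ < 1) (k : ℕ) :
    vk q k = 1/(1+q*(q^2)^k) + ((q^2)^(k+1)/(1+(q^2)^(k+1))) * vk q (k+1) := by
  have h1 := ne_Q hq k
  have h2 := ne_qQ hq k
  have h := vstep hq k
  field_simp
  linear_combination h

lemma wdiv (hq : ‖q‖ < 1) (k : ℕ) :
    wk q k = (1+(q^2)^(2*k+1))/(1+q*(q^2)^k)
      + (q*(q^2)^(2*k+1)*(1-(q^2)^(k+1))*(1-q*(q^2)^k)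
        / ((1+(q^2)^(k+1))*(1+q*(q^2)^k))) * wk q (k+1) := by
  have h1 := ne_Q hq k
  have h2 := ne_qQ hq k
  have h := wstep hq k
  field_simp
  linear_combination h

end Chain

section Series
variable {q : ℂ}

noncomputable def bterm (q : ℂ) (n : ℕ) : ℂ :=
  q ^ ((n + 1) * n) / ((1 + q ^ (2 * (n + 1) - 1)) * qPoch (-q ^ 2) (q ^ 2) n)

noncomputable def yv (q : ℂ) (j : ℕ) : ℂ := (q^2)^(j+1)/(1+(q^2)^(j+1))

noncomputable def yw (q : ℂ) (j : ℕ) : ℂ :=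
  q*(q^2)^(2*j+1)*(1-(q^2)^(j+1))*(1-q*(q^2)^j)/((1+(q^2)^(j+1))*(1+q*(q^2)^j))

noncomputable def cterm (q : ℂ) (k : ℕ) : ℂ :=
  (∏ j ∈ Finset.range k, yw q j) * ((1+(q^2)^(2*k+1))/(1+q*(q^2)^k))

lemma qPoch_negq2 (q : ℂ) (N : ℕ) :
    qPoch (-q^2) (q^2) N = ∏ j ∈ Finset.range N, (1+(q^2)^(j+1)) :=
  Finset.prod_congr rfl fun j _ => by ring

lemma qPoch_negq2_ne (hq : ‖q‖ < 1) (N : ℕ) : qPoch (-q^2) (q^2) N ≠ 0 := by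
  rw [qPoch_negq2]
  exact Finset.prod_ne_zero_iff.2 fun j _ => ne_Q hq j

lemma prod_q2_pow (q : ℂ) : ∀ N : ℕ,
    ∏ j ∈ Finset.range N, (q^2)^(j+1) = q^((N+1)*N) := by
  intro N
  induction N with
  | zero => simp
  | succ m ih =>
    rw [Finset.prod_range_succ, ih, show (q^2)^(m+1) = q^(2*m+2) by ring, ← pow_add]
    congr 1
    ring

lemma bterm_eq (hq : ‖q‖ < 1) (N : ℕ) :
    bterm q N = (∏ j ∈ Finset.range N, yv q j) / (1+q*(q^2)^N) := by
  unfold bterm yv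
  rw [Finset.prod_div_distrib, prod_q2_pow, ← qPoch_negq2]
  rw [show 2*(N+1)-1 = 2*N+1 by omega, show q^(2*N+1) = q*(q^2)^N by ring]
  rw [div_div, mul_comm (qPoch (-q^2) (q^2) N) (1+q*(q^2)^N)]

lemma vsum (hq : ‖q‖ < 1) : ∀ N : ℕ,
    vk q 0 = (∑ k ∈ Finset.range N, bterm q k)
      + (∏ j ∈ Finset.range N, yv q j) * vk q N := by
  intro N
  induction N with
  | zero => simp
  | succ m ih =>
    rw [ih, vdiv hq m, Finset.sum_range_succ, Finset.prod_range_succ,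
      bterm_eq hq m]
    unfold yv
    ring

lemma wsum (hq : ‖q‖ < 1) : ∀ N : ℕ,
    wk q 0 = (∑ k ∈ Finset.range N, cterm q k)
      + (∏ j ∈ Finset.range N, yw q j) * wk q N := by
  intro N
  induction N with
  | zero => simp
  | succ m ih =>
    rw [ih, wdiv hq m, Finset.sum_range_succ, Finset.prod_range_succ]
    unfold cterm yw
    ring

-- norm helpers
lemma norm_one_add_le {z : ℂ} (hz : ‖z‖ ≤ 1) : ‖1+z‖ ≤ 2 := by
  calc ‖1+z‖ ≤ ‖(1:ℂ)‖ + ‖z‖ := norm_add_le _ _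
    _ ≤ 2 := by rw [norm_one]; linarith

lemma norm_one_sub_le {z : ℂ} (hz : ‖z‖ ≤ 1) : ‖1-z‖ ≤ 2 := by
  calc ‖1-z‖ ≤ ‖(1:ℂ)‖ + ‖z‖ := norm_sub_le _ _
    _ ≤ 2 := by rw [norm_one]; linarith

lemma norm_one_add_ge {z : ℂ} : 1 - ‖z‖ ≤ ‖1+z‖ := by
  have := norm_sub_norm_le (1:ℂ) (-z)
  simpa [sub_neg_eq_add] using this

lemma norm_pow_le_self (hq : ‖q‖ < 1) {m : ℕ} (hm : 1 ≤ m) : ‖q^m‖ ≤ ‖q‖ := by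
  rw [norm_pow]
  calc ‖q‖^m ≤ ‖q‖^1 := pow_le_pow_of_le_one (norm_nonneg q) hq.le hm
    _ = ‖q‖ := pow_one _

lemma rem_v (hq : ‖q‖ < 1) :
    Tendsto (fun N => (∏ j ∈ Finset.range N, yv q j) * vk q N) atTop (𝓝 0) := by
  have hQ := normQ hq
  have h1 : (0:ℝ) < 1 - ‖q^2‖ := by linarith
  have h1q : (0:ℝ) < 1 - ‖q‖ := by linarith
  set M : ℝ := 2 * Real.exp ((1-‖q^2‖)⁻¹) * (1-‖q‖)⁻¹ with hM
  have hM0 : 0 ≤ M := by positivity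
  set ρ : ℕ → ℝ := fun j => ‖q^2‖^(j+1) / (1-‖q^2‖) with hρ
  have hρ0 : ∀ j, 0 ≤ ρ j := fun j => by positivity
  have hρlim : Tendsto ρ atTop (𝓝 0) := by
    have hp : Tendsto (fun j : ℕ => ‖q^2‖^j) atTop (𝓝 0) :=
      tendsto_pow_atTop_nhds_zero_of_lt_one (norm_nonneg _) hQ
    have h2 := (hp.mul_const ‖q^2‖).div_const (1-‖q^2‖)
    rw [zero_mul, zero_div] at h2
    have he : ∀ j : ℕ, ρ j = ‖q^2‖^j * ‖q^2‖ / (1-‖q^2‖) := by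
      intro j; rw [hρ]; rw [← pow_succ]
    rw [funext he]
    exact h2
  have hprodρ : Tendsto (fun N => (∏ j ∈ Finset.range N, ρ j) * M) atTop (𝓝 0) := by
    simpa using (prod_tendsto_zero hρ0 hρlim).mul_const M
  apply squeeze_zero_norm' _ hprodρ
  have hev : ∀ᶠ N : ℕ in atTop, ‖q^2‖^(N+1) ≤ (1-‖q^2‖)/2 := by
    have hp0 : Tendsto (fun j : ℕ => ‖q^2‖^j) atTop (𝓝 0) :=
      tendsto_pow_atTop_nhds_zero_of_lt_one (norm_nonneg _) hQ
    have hp := hp0.mul_const ‖q^2‖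
    rw [zero_mul] at hp
    have he : ∀ N : ℕ, ‖q^2‖^(N+1) = ‖q^2‖^N * ‖q^2‖ := fun N => by rw [← pow_succ]
    have hp2 : Tendsto (fun N : ℕ => ‖q^2‖^(N+1)) atTop (𝓝 0) := by
      rw [funext he]; exact hp
    exact hp2.eventually_le_const (by linarith)
  filter_upwards [hev] with N hN
  rw [norm_mul]
  apply mul_le_mul _ _ (norm_nonneg _) (Finset.prod_nonneg fun j _ => hρ0 j)
  · rw [norm_prod]
    apply Finset.prod_le_prod (fun j _ => norm_nonneg _)
    intro j _
    unfold yv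
    rw [norm_div, norm_pow]
    apply div_le_div₀ _ _ h1 _
    · positivity
    · rw [← norm_pow]
    · calc 1 - ‖q^2‖ ≤ 1 - ‖(q^2)^(j+1)‖ := by
            have : ‖(q^2)^(j+1)‖ ≤ ‖q^2‖ := by
              rw [norm_pow]
              calc ‖q^2‖^(j+1) ≤ ‖q^2‖^1 := pow_le_pow_of_le_one (norm_nonneg _) hQ.le (by omega)
                _ = ‖q^2‖ := pow_one _
            linarith
        _ ≤ ‖1 + (q^2)^(j+1)‖ := norm_one_add_ge
  · unfold vk
    apply norm_FF_le hQ hq.le _ hq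
    · rwa [norm_neg, norm_pow]
    · rw [norm_neg, norm_mul]
      calc ‖q‖ * ‖(q^2)^N‖ ≤ ‖q‖ * 1 := by
            apply mul_le_mul_of_nonneg_left _ (norm_nonneg q)
            rw [norm_pow]
            exact pow_le_one₀ (norm_nonneg _) hQ.le
        _ = ‖q‖ := mul_one _

lemma rem_w (hq : ‖q‖ < 1) :
    Tendsto (fun N => (∏ j ∈ Finset.range N, yw q j) * wk q N) atTop (𝓝 0) := by
  have hQ := normQ hq
  have h1 : (0:ℝ) < 1 - ‖q^2‖ := by linarith
  have h1q : (0:ℝ) < 1 - ‖q‖ := by linarith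
  set M : ℝ := 2 * Real.exp ((1-‖q^2‖)⁻¹) * (1-‖q‖)⁻¹ with hM
  have hM0 : 0 ≤ M := by positivity
  set ρ : ℕ → ℝ := fun j => 4 * ‖q‖^(4*j+3) / ((1-‖q‖)*(1-‖q‖)) with hρ
  have hρ0 : ∀ j, 0 ≤ ρ j := fun j => by positivity
  have hρlim : Tendsto ρ atTop (𝓝 0) := by
    have hq4 : ‖q‖^4 < 1 := by
      calc ‖q‖^4 ≤ ‖q‖^1 := pow_le_pow_of_le_one (norm_nonneg q) hq.le (by omega)
        _ = ‖q‖ := pow_one _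
        _ < 1 := hq
    have hp : Tendsto (fun j : ℕ => (‖q‖^4)^j) atTop (𝓝 0) :=
      tendsto_pow_atTop_nhds_zero_of_lt_one (by positivity) hq4
    have h2 := ((hp.const_mul (‖q‖^3)).const_mul 4).div_const ((1-‖q‖)*(1-‖q‖))
    rw [mul_zero, mul_zero, zero_div] at h2
    have he : ∀ j : ℕ, ρ j = 4 * (‖q‖^3 * (‖q‖^4)^j) / ((1-‖q‖)*(1-‖q‖)) := by
      intro j; rw [hρ]
      rw [← pow_mul, ← pow_add]
      ring_nf
    rw [funext he]
    exact h2
  have hprodρ : Tendsto (fun N => (∏ j ∈ Finset.range N, ρ j) * M) atTop (𝓝 0) := by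
    simpa using (prod_tendsto_zero hρ0 hρlim).mul_const M
  apply squeeze_zero_norm' _ hprodρ
  have hev : ∀ᶠ N : ℕ in atTop, ‖q^2‖^(N+1) ≤ (1-‖q^2‖)/2 := by
    have hp0 : Tendsto (fun j : ℕ => ‖q^2‖^j) atTop (𝓝 0) :=
      tendsto_pow_atTop_nhds_zero_of_lt_one (norm_nonneg _) hQ
    have hp := hp0.mul_const ‖q^2‖
    rw [zero_mul] at hp
    have he : ∀ N : ℕ, ‖q^2‖^(N+1) = ‖q^2‖^N * ‖q^2‖ := fun N => by rw [← pow_succ]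
    have hp2 : Tendsto (fun N : ℕ => ‖q^2‖^(N+1)) atTop (𝓝 0) := by
      rw [funext he]; exact hp
    exact hp2.eventually_le_const (by linarith)
  filter_upwards [hev] with N hN
  rw [norm_mul]
  apply mul_le_mul _ _ (norm_nonneg _) (Finset.prod_nonneg fun j _ => hρ0 j)
  · rw [norm_prod]
    apply Finset.prod_le_prod (fun j _ => norm_nonneg _)
    intro j _
    unfold yw
    rw [norm_div]
    apply div_le_div₀ _ _ (by positivity) _
    · positivity
    · have e1 : ‖q * (q^2)^(2*j+1)‖ = ‖q‖^(4*j+3) := by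
        rw [show q * (q^2)^(2*j+1) = q^(4*j+3) by ring, norm_pow]
      have e2 : ‖1 - (q^2)^(j+1)‖ ≤ 2 := by
        apply norm_one_sub_le
        rw [show (q^2)^(j+1) = q^(2*j+2) by ring]
        calc ‖q^(2*j+2)‖ ≤ ‖q‖ := norm_pow_le_self hq (by omega)
          _ ≤ 1 := hq.le
      have e3 : ‖1 - q*(q^2)^j‖ ≤ 2 := by
        apply norm_one_sub_le
        rw [show q*(q^2)^j = q^(2*j+1) by ring]
        calc ‖q^(2*j+1)‖ ≤ ‖q‖ := norm_pow_le_self hq (by omega)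
          _ ≤ 1 := hq.le
      calc ‖q * (q^2)^(2*j+1) * (1 - (q^2)^(j+1)) * (1 - q*(q^2)^j)‖
          = ‖q * (q^2)^(2*j+1)‖ * ‖1 - (q^2)^(j+1)‖ * ‖1 - q*(q^2)^j‖ := by
            rw [norm_mul, norm_mul]
        _ ≤ ‖q‖^(4*j+3) * 2 * 2 := by
            rw [e1]
            apply mul_le_mul _ e3 (norm_nonneg _) (by positivity)
            apply mul_le_mul_of_nonneg_left e2 (by positivity)
        _ = 4 * ‖q‖^(4*j+3) := by ring
    · rw [norm_mul]
      have e4 : 1 - ‖q‖ ≤ ‖1 + (q^2)^(j+1)‖ := by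
        calc 1 - ‖q‖ ≤ 1 - ‖(q^2)^(j+1)‖ := by
              have : ‖(q^2)^(j+1)‖ ≤ ‖q‖ := by
                rw [show (q^2)^(j+1) = q^(2*j+2) by ring]
                exact norm_pow_le_self hq (by omega)
              linarith
          _ ≤ ‖1 + (q^2)^(j+1)‖ := norm_one_add_ge
      have e5 : 1 - ‖q‖ ≤ ‖1 + q*(q^2)^j‖ := by
        calc 1 - ‖q‖ ≤ 1 - ‖q*(q^2)^j‖ := by
              have : ‖q*(q^2)^j‖ ≤ ‖q‖ := by
                rw [show q*(q^2)^j = q^(2*j+1) by ring]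
                exact norm_pow_le_self hq (by omega)
              linarith
          _ ≤ ‖1 + q*(q^2)^j‖ := norm_one_add_ge
      exact mul_le_mul e4 e5 h1q.le (norm_nonneg _)
  · unfold wk
    apply norm_FF_le hQ _ _ hq
    · rwa [norm_neg, norm_pow]
    · rw [norm_mul]
      calc ‖q‖ * ‖(q^2)^N‖ ≤ ‖q‖ * 1 := by
            apply mul_le_mul_of_nonneg_left _ (norm_nonneg q)
            rw [norm_pow]
            exact pow_le_one₀ (norm_nonneg _) hQ.le
        _ = ‖q‖ := mul_one _
        _ ≤ 1 := hq.le
    · rw [norm_neg, norm_mul]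
      calc ‖q‖ * ‖(q^2)^N‖ ≤ ‖q‖ * 1 := by
            apply mul_le_mul_of_nonneg_left _ (norm_nonneg q)
            rw [norm_pow]
            exact pow_le_one₀ (norm_nonneg _) hQ.le
        _ = ‖q‖ := mul_one _

end Series

section Limits
variable {q : ℂ}

lemma v0_eq_w0 (q : ℂ) : vk q 0 = wk q 0 := by
  unfold vk wk
  norm_num

lemma bterm_succ (hq : ‖q‖ < 1) (n : ℕ) :
    bterm q (n+1) = bterm q n
      * (q^(2*n+2) * (1+q^(2*n+1)) / ((1+q^(2*n+3))*(1+q^(2*n+2)))) := by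
  unfold bterm
  rw [show 2*(n+1+1)-1 = 2*n+3 by omega, show 2*(n+1)-1 = 2*n+1 by omega,
    qPoch_succ, show (n+1+1)*(n+1) = (n+1)*n + (2*n+2) by ring, pow_add,
    show (1:ℂ) - (-q^2)*(q^2)^n = 1 + q^(2*n+2) by ring]
  have h1 : (1:ℂ) + q^(2*n+1) ≠ 0 := one_add_pow_ne hq (by omega)
  have h2 : (1:ℂ) + q^(2*n+2) ≠ 0 := one_add_pow_ne hq (by omega)
  have h3 : (1:ℂ) + q^(2*n+3) ≠ 0 := one_add_pow_ne hq (by omega)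
  have h4 := qPoch_negq2_ne hq n
  field_simp

lemma summable_bterm (hq : ‖q‖ < 1) : Summable (bterm q) := by
  have h1q : (0:ℝ) < 1 - ‖q‖ := by linarith
  set c : ℕ → ℝ := fun n => 2*‖q‖^(2*n+2)/((1-‖q‖)*(1-‖q‖)) with hc
  apply summable_ratio (c := c) (L := 0) _ _ _ (by norm_num)
  · intro n
    rw [bterm_succ hq n, norm_mul, mul_comm (c n)]
    apply mul_le_mul_of_nonneg_left _ (norm_nonneg _)
    rw [norm_div, norm_mul, norm_mul, norm_pow]
    have e1 : ‖1+q^(2*n+1)‖ ≤ 2 := norm_one_add_le (le_trans (norm_pow_le_self hq (by omega)) hq.le)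
    have e2 : 1-‖q‖ ≤ ‖1+q^(2*n+3)‖ := by
      have := norm_pow_le_self hq (m := 2*n+3) (by omega)
      calc 1-‖q‖ ≤ 1-‖q^(2*n+3)‖ := by linarith
        _ ≤ ‖1+q^(2*n+3)‖ := norm_one_add_ge
    have e3 : 1-‖q‖ ≤ ‖1+q^(2*n+2)‖ := by
      have := norm_pow_le_self hq (m := 2*n+2) (by omega)
      calc 1-‖q‖ ≤ 1-‖q^(2*n+2)‖ := by linarith
        _ ≤ ‖1+q^(2*n+2)‖ := norm_one_add_ge
    rw [hc]
    apply div_le_div₀ _ _ (by positivity) _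
    · positivity
    · calc ‖q‖^(2*n+2) * ‖1+q^(2*n+1)‖ ≤ ‖q‖^(2*n+2) * 2 :=
            mul_le_mul_of_nonneg_left e1 (by positivity)
        _ = 2*‖q‖^(2*n+2) := by ring
    · exact mul_le_mul e2 e3 h1q.le (norm_nonneg _)
  · intro n; rw [hc]; positivity
  · rw [hc]
    have hq2 : ‖q‖^2 < 1 := by
      rcases eq_or_lt_of_le (norm_nonneg q) with h | h
      · rw [← h]; norm_num
      · nlinarith
    have hp : Tendsto (fun n : ℕ => (‖q‖^2)^n) atTop (𝓝 0) :=
      tendsto_pow_atTop_nhds_zero_of_lt_one (by positivity) hq2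
    have h2 := ((hp.const_mul (‖q‖^2)).const_mul 2).div_const ((1-‖q‖)*(1-‖q‖))
    rw [mul_zero, mul_zero, zero_div] at h2
    have he : ∀ n : ℕ, 2*‖q‖^(2*n+2)/((1-‖q‖)*(1-‖q‖))
        = 2*(‖q‖^2 * (‖q‖^2)^n)/((1-‖q‖)*(1-‖q‖)) := by
      intro n
      rw [← pow_mul, ← pow_add]
      ring_nf
    rw [funext he]
    exact h2

lemma vk0_eq (hq : ‖q‖ < 1) : vk q 0 = ∑' n, bterm q n := by
  have h1 : Tendsto (fun N => ∑ k ∈ Finset.range N, bterm q k) atTop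
      (𝓝 (∑' n, bterm q n)) := (summable_bterm hq).hasSum.tendsto_sum_nat
  have h2 := rem_v hq
  have h3 : Tendsto (fun N => (∑ k ∈ Finset.range N, bterm q k)
      + (∏ j ∈ Finset.range N, yv q j) * vk q N) atTop (𝓝 (∑' n, bterm q n + 0)) :=
    h1.add h2
  have h4 : (fun N => (∑ k ∈ Finset.range N, bterm q k)
      + (∏ j ∈ Finset.range N, yv q j) * vk q N) = fun _ => vk q 0 := by
    funext N; exact (vsum hq N).symm
  rw [h4] at h3
  have h5 := tendsto_nhds_unique tendsto_const_nhds h3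
  rw [h5, add_zero]

lemma wk0_eq (hq : ‖q‖ < 1) (hc : Summable (cterm q)) : wk q 0 = ∑' k, cterm q k := by
  have h1 : Tendsto (fun N => ∑ k ∈ Finset.range N, cterm q k) atTop
      (𝓝 (∑' k, cterm q k)) := hc.hasSum.tendsto_sum_nat
  have h3 : Tendsto (fun N => (∑ k ∈ Finset.range N, cterm q k)
      + (∏ j ∈ Finset.range N, yw q j) * wk q N) atTop (𝓝 (∑' k, cterm q k + 0)) :=
    h1.add (rem_w hq)
  have h4 : (fun N => (∑ k ∈ Finset.range N, cterm q k)
      + (∏ j ∈ Finset.range N, yw q j) * wk q N) = fun _ => wk q 0 := by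
    funext N; exact (wsum hq N).symm
  rw [h4] at h3
  have h5 := tendsto_nhds_unique tendsto_const_nhds h3
  rw [h5, add_zero]

end Limits

section Pairing
variable {q : ℂ}

noncomputable def aterm (q : ℂ) (n : ℕ) : ℂ :=
  (-1 : ℂ) ^ n * qPoch q q n * q ^ (n * (n + 1) / 2) / qPoch (-q) q n

lemma qPoch_negq_ne (hq : ‖q‖ < 1) (n : ℕ) : qPoch (-q) q n ≠ 0 :=
  qPoch_ne_zero (by rwa [norm_neg]) hq.le n

lemma tri_succ (n : ℕ) : (n+1) * (n+1+1) / 2 = n*(n+1)/2 + (n+1) := by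
  rw [show (n+1)*(n+1+1) = n*(n+1) + (n+1)*2 by ring,
    Nat.add_mul_div_right _ _ (by norm_num : (0:ℕ) < 2)]

lemma aterm_succ (hq : ‖q‖ < 1) (n : ℕ) :
    aterm q (n+1) = aterm q n * (-((1 - q^(n+1)) * q^(n+1)) / (1 + q^(n+1))) := by
  unfold aterm
  rw [qPoch_succ, qPoch_succ, tri_succ, pow_add, pow_succ]
  have h1 : (1:ℂ) + q^(n+1) ≠ 0 := one_add_pow_ne hq (by omega)
  have h2 := qPoch_negq_ne hq n
  rw [show (1:ℂ) - (-q)*q^n = 1 + q^(n+1) by rw [pow_succ]; ring]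
  field_simp
  ring

lemma summable_aterm (hq : ‖q‖ < 1) : Summable (aterm q) := by
  have h1q : (0:ℝ) < 1 - ‖q‖ := by linarith
  set c : ℕ → ℝ := fun n => 2*‖q‖^(n+1)/(1-‖q‖) with hc
  apply summable_ratio (c := c) (L := 0) _ _ _ (by norm_num)
  · intro n
    rw [aterm_succ hq n, norm_mul, mul_comm (c n)]
    apply mul_le_mul_of_nonneg_left _ (norm_nonneg _)
    rw [norm_div, norm_neg, norm_mul, norm_pow]
    have e1 : ‖1 - q^(n+1)‖ ≤ 2 :=
      norm_one_sub_le (le_trans (norm_pow_le_self hq (by omega)) hq.le)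
    have e2 : 1-‖q‖ ≤ ‖1+q^(n+1)‖ := by
      have := norm_pow_le_self hq (m := n+1) (by omega)
      calc 1-‖q‖ ≤ 1-‖q^(n+1)‖ := by linarith
        _ ≤ ‖1+q^(n+1)‖ := norm_one_add_ge
    rw [hc]
    apply div_le_div₀ _ _ (by positivity) e2
    · positivity
    · calc ‖1 - q^(n+1)‖ * ‖q‖^(n+1) ≤ 2 * ‖q‖^(n+1) :=
          mul_le_mul_of_nonneg_right e1 (by positivity)
        _ = 2*‖q‖^(n+1) := by ring
  · intro n; rw [hc]; positivity
  · rw [hc]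
    have hp : Tendsto (fun n : ℕ => ‖q‖^n) atTop (𝓝 0) :=
      tendsto_pow_atTop_nhds_zero_of_lt_one (norm_nonneg _) hq
    have h2 := ((hp.const_mul ‖q‖).const_mul 2).div_const (1-‖q‖)
    rw [mul_zero, mul_zero, zero_div] at h2
    have he : ∀ n : ℕ, 2*‖q‖^(n+1)/(1-‖q‖) = 2*(‖q‖ * ‖q‖^n)/(1-‖q‖) := by
      intro n; rw [pow_succ]; ring_nf
    rw [funext he]
    exact h2

lemma core_id (hq : ‖q‖ < 1) : ∀ k : ℕ,
    qPoch q q (2*k) * q^(k*(2*k+1))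
        * (∏ j ∈ Finset.range k, ((1+(q^2)^(j+1))*(1+q*(q^2)^j)))
      = (∏ j ∈ Finset.range k, (q*(q^2)^(2*j+1)*(1-(q^2)^(j+1))*(1-q*(q^2)^j)))
        * qPoch (-q) q (2*k) := by
  intro k
  induction k with
  | zero => simp [qPoch_zero]
  | succ m ih =>
    rw [Finset.prod_range_succ, Finset.prod_range_succ]
    have e1 : qPoch q q (2*(m+1)) = qPoch q q (2*m) * (1 - q*q^(2*m)) * (1 - q*q^(2*m+1)) := by
      rw [show 2*(m+1) = (2*m+1)+1 by ring, qPoch_succ, show 2*m+1 = (2*m)+1 from rfl, qPoch_succ]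
    have e2 : qPoch (-q) q (2*(m+1))
        = qPoch (-q) q (2*m) * (1 + q*q^(2*m)) * (1 + q*q^(2*m+1)) := by
      rw [show 2*(m+1) = (2*m+1)+1 by ring, qPoch_succ, show 2*m+1 = (2*m)+1 from rfl, qPoch_succ]
      ring
    have e3 : q^((m+1)*(2*(m+1)+1)) = q^(m*(2*m+1)) * q^(4*m+3) := by
      rw [← pow_add]
      congr 1
      ring
    rw [e1, e2, e3]
    linear_combination (q^(4*m+3) * (1 - q*q^(2*m)) * (1 - q*q^(2*m+1))
      * (1 + q*q^(2*m)) * (1 + q*q^(2*m+1))) * ih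
      + (0 : ℂ)

lemma pair_eq (hq : ‖q‖ < 1) (k : ℕ) :
    aterm q (2*k) + aterm q (2*k+1) = cterm q k := by
  have hB := qPoch_negq_ne hq (2*k)
  have hs : (1:ℂ) + q^(2*k+1) ≠ 0 := one_add_pow_ne hq (by omega)
  have hWd : (∏ j ∈ Finset.range k, ((1+(q^2)^(j+1))*(1+q*(q^2)^j))) ≠ 0 :=
    Finset.prod_ne_zero_iff.2 fun j _ => mul_ne_zero (ne_Q hq j) (ne_qQ hq j)
  have lhs_eq : aterm q (2*k) + aterm q (2*k+1)
      = qPoch q q (2*k) * q^(k*(2*k+1)) * (1+q^(4*k+2))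
        / (qPoch (-q) q (2*k) * (1+q^(2*k+1))) := by
    unfold aterm
    rw [show 2*k*(2*k+1)/2 = k*(2*k+1) by
        rw [show 2*k*(2*k+1) = (k*(2*k+1))*2 by ring, Nat.mul_div_cancel _ (by norm_num)]]
    rw [show (2*k+1)*(2*k+1+1)/2 = k*(2*k+1) + (2*k+1) by
        rw [show (2*k+1)*(2*k+1+1) = (k*(2*k+1) + (2*k+1))*2 by ring,
          Nat.mul_div_cancel _ (by norm_num)]]
    rw [pow_add]
    rw [show (2*k+1 : ℕ) = (2*k)+1 from rfl, qPoch_succ, qPoch_succ]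
    rw [show ((-1:ℂ))^(2*k) = 1 by rw [pow_mul]; norm_num, pow_succ]
    rw [show (1:ℂ) - (-q)*q^(2*k) = 1 + q^(2*k+1) by rw [pow_succ]; ring]
    rw [show (1:ℂ) - q*q^(2*k) = 1 - q^(2*k+1) by rw [pow_succ]; ring]
    field_simp
    ring
  have rhs_eq : cterm q k
      = (∏ j ∈ Finset.range k, (q*(q^2)^(2*j+1)*(1-(q^2)^(j+1))*(1-q*(q^2)^j)))
          * (1+q^(4*k+2))
        / ((∏ j ∈ Finset.range k, ((1+(q^2)^(j+1))*(1+q*(q^2)^j))) * (1+q^(2*k+1))) := by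
    unfold cterm yw
    rw [Finset.prod_div_distrib]
    rw [show ((q:ℂ)^2)^(2*k+1) = q^(4*k+2) by ring, show (q:ℂ)*(q^2)^k = q^(2*k+1) by ring]
    rw [div_mul_div_comm]
  rw [lhs_eq, rhs_eq, div_eq_div_iff (mul_ne_zero hB hs) (mul_ne_zero hWd hs)]
  linear_combination ((1+q^(4*k+2)) * (1+q^(2*k+1))) * core_id hq k

end Pairing

/-- For |q|<1,
`∑_{n≥1} q^(n(n-1))/((1+q^(2n-1))(-q²;q²)_(n-1))
  = W₁(q) = ∑_{n≥0} (-1)^n (q;q)_n q^(n(n+1)/2)/(-q;q)_n`. -/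
theorem stmt_14 (q : ℂ) (hq : ‖q‖ < 1) :
    ∑' n : ℕ, q ^ ((n + 1) * n) / ((1 + q ^ (2 * (n + 1) - 1)) * qPoch (-q ^ 2) (q ^ 2) n)
      = ∑' n : ℕ, (-1 : ℂ) ^ n * qPoch q q n * q ^ (n * (n + 1) / 2) / qPoch (-q) q n := by
  have ha := summable_aterm hq
  have hinj2 : Function.Injective (fun k : ℕ => 2*k) := fun a b h => by
    have h2 : 2*a = 2*b := h
    omega
  have hinj2' : Function.Injective (fun k : ℕ => 2*k+1) := fun a b h => by
    have h2 : 2*a+1 = 2*b+1 := h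
    omega
  have he : Summable (fun k => aterm q (2*k)) := ha.comp_injective hinj2
  have ho : Summable (fun k => aterm q (2*k+1)) := ha.comp_injective hinj2'
  have hpair : (fun k => aterm q (2*k) + aterm q (2*k+1)) = cterm q :=
    funext fun k => pair_eq hq k
  have hc : Summable (cterm q) := by rw [← hpair]; exact he.add ho
  calc ∑' n : ℕ, q ^ ((n + 1) * n) / ((1 + q ^ (2 * (n + 1) - 1)) * qPoch (-q ^ 2) (q ^ 2) n)
      = ∑' n, bterm q n := tsum_congr fun n => rfl
    _ = vk q 0 := (vk0_eq hq).symm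
    _ = wk q 0 := v0_eq_w0 q
    _ = ∑' k, cterm q k := wk0_eq hq hc
    _ = ∑' k, (aterm q (2*k) + aterm q (2*k+1)) := by rw [hpair]
    _ = (∑' k, aterm q (2*k)) + (∑' k, aterm q (2*k+1)) := Summable.tsum_add he ho
    _ = ∑' n, aterm q n := tsum_even_add_odd he ho
    _ = ∑' n : ℕ, (-1 : ℂ) ^ n * qPoch q q n * q ^ (n * (n + 1) / 2) / qPoch (-q) q n :=
        tsum_congr fun n => rfl
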